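/- Define T(n,k) for n ≥ 1 by T(1,1) = 1, T(1,k) = 0 for k ≠ 1, and T(n,k) = (2k-1)T(n-1,k) + 3T(n-1,k-1) + (2n-2k+2)T(n-1,k-2) for n ≥ 2 (with T(n,k) = 0 for k ≤ 0). Let D_G be the derivation on ℝ[a,b,c] with D_G(a) = a(b+c), D_G(b) = 2bc, D_G(c) = 2b². Then for all n ≥ 1, D_G^n(a) = a(b+c) · Σ_{k=1}^{n} T(n,k) b^{k-1} c^{n-k}. -/

import Mathlib

set_option maxHeartbeats 400000 in
/-- Grammatical description of the type `B` alternating run numbers `T(n,k)` over up signed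
permutations: if `D` is the derivation on `ℝ[a,b,c]` with `D a = a(b+c)`, `D b = 2bc`,
`D c = 2b²`, then `Dⁿ(a) = a(b+c)·Σ_{k=1}^{n} T(n,k) b^{k-1} c^{n-k}` for all `n ≥ 1`. -/
theorem grammar_typeB_run
    (D : Derivation ℝ (MvPolynomial (Fin 3) ℝ) (MvPolynomial (Fin 3) ℝ))
    (ha : D (MvPolynomial.X 0) = MvPolynomial.X 0 * (MvPolynomial.X 1 + MvPolynomial.X 2))
    (hb : D (MvPolynomial.X 1) = 2 * (MvPolynomial.X 1 * MvPolynomial.X 2))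
    (hc : D (MvPolynomial.X 2) = 2 * MvPolynomial.X 1 ^ 2)
    (T : ℕ → ℕ → ℕ)
    (hT11 : T 1 1 = 1) (hT1 : ∀ k : ℕ, k ≠ 1 → T 1 k = 0) (hT0 : ∀ n : ℕ, T n 0 = 0)
    (hTrec : ∀ n k : ℕ, 2 ≤ n → 1 ≤ k →
      T n k = (2 * k - 1) * T (n - 1) k + 3 * T (n - 1) (k - 1) +
        (2 * n + 2 - 2 * k) * T (n - 1) (k - 2))
    (n : ℕ) (hn : 1 ≤ n) :
    (⇑D)^[n] (MvPolynomial.X 0) =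
      MvPolynomial.X 0 * (MvPolynomial.X 1 + MvPolynomial.X 2) *
        ∑ k ∈ Finset.Icc 1 n,
          (T n k : MvPolynomial (Fin 3) ℝ) * MvPolynomial.X 1 ^ (k - 1) *
            MvPolynomial.X 2 ^ (n - k) := by
  classical
  set P := MvPolynomial (Fin 3) ℝ
  set a : P := MvPolynomial.X 0 with ha'
  set b : P := MvPolynomial.X 1 with hb'
  set c : P := MvPolynomial.X 2 with hc'
  -- vanishing of T above the diagonal
  have Tzero : ∀ N, 1 ≤ N → ∀ k, N < k → T N k = 0 := by
    intro N
    induction N with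
    | zero => omega
    | succ m ih =>
      intro _ k hk
      rcases Nat.eq_zero_or_pos m with rfl | hm
      · exact hT1 k (by omega)
      · have hrec := hTrec (m + 1) k (by omega) (by omega)
        simp only [Nat.add_sub_cancel] at hrec
        have h1 : T m k = 0 := ih hm k (by omega)
        have h2 : T m (k - 1) = 0 := ih hm (k - 1) (by omega)
        have h3 : 2 * (m + 1) + 2 - 2 * k = 0 := by omega
        rw [hrec, h1, h2, h3]; ring
  -- derivative of powers of b and c
  have Dbpow : ∀ k : ℕ, D (b ^ k) = 2 * (k : P) * (b ^ k * c) := by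
    intro k
    induction k with
    | zero => simp
    | succ p ih =>
      rw [pow_succ, D.leibniz, ih, hb, smul_eq_mul, smul_eq_mul]
      push_cast
      ring
  have Dcpow : ∀ j : ℕ, D (c ^ j) = 2 * (j : P) * (b ^ 2 * c ^ (j - 1)) := by
    intro j
    induction j with
    | zero => simp
    | succ p ih =>
      rw [pow_succ, D.leibniz, ih, hc, smul_eq_mul, smul_eq_mul, Nat.add_sub_cancel]
      rcases Nat.eq_zero_or_pos p with rfl | hp
      · push_cast; ring
      · have hcc : c * c ^ (p - 1) = c ^ p := by
          rw [← pow_succ']; congr 1; omega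
        push_cast
        linear_combination (2 * (p : P) * b ^ 2) * hcc
  -- key single-term derivative computation
  have key : ∀ k j : ℕ, D (a * ((b + c) * (b ^ k * c ^ j))) =
      a * ((b + c) * (3 * (b ^ (k + 1) * c ^ j) + (2 * (k : P) + 1) * (b ^ k * c ^ (j + 1)) +
        2 * (j : P) * (b ^ (k + 2) * c ^ (j - 1)))) := by
    intro k j
    rw [D.leibniz, D.leibniz, D.leibniz, map_add, ha, hb, hc, Dbpow, Dcpow]
    simp only [smul_eq_mul]
    ring
  -- D of natCast multiples
  have hDnat : ∀ (m : ℕ) (x : P), D ((m : P) * x) = (m : P) * D x := by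
    intro m x
    rw [← nsmul_eq_mul, map_nsmul, nsmul_eq_mul]
  -- main statement over `range`
  have main : ∀ N, 1 ≤ N → (⇑D)^[N] a =
      a * ((b + c) * ∑ k ∈ Finset.range N, (T N (k + 1) : P) * (b ^ k * c ^ (N - 1 - k))) := by
    intro N
    induction N with
    | zero => omega
    | succ m ih =>
      intro _
      rcases Nat.eq_zero_or_pos m with rfl | hm
      · simp [hT11, ha]
      · obtain ⟨p, rfl⟩ : ∃ p, m = p + 1 := ⟨m - 1, by omega⟩
        have ihm := ih (by omega)
        rw [Function.iterate_succ_apply', ihm]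
        simp only [Nat.add_sub_cancel] at *
        -- rewrite the source sum so each term is natCast * (a * ((b+c) * monomial))
        have step1 : a * ((b + c) * ∑ k ∈ Finset.range (p + 1),
            (T (p + 1) (k + 1) : P) * (b ^ k * c ^ (p - k))) =
            ∑ k ∈ Finset.range (p + 1),
              (T (p + 1) (k + 1) : P) * (a * ((b + c) * (b ^ k * c ^ (p - k)))) := by
          rw [Finset.mul_sum, Finset.mul_sum]
          exact Finset.sum_congr rfl fun k _ => by ring
        rw [step1, map_sum]
        have step2 : ∀ k ∈ Finset.range (p + 1),
            D ((T (p + 1) (k + 1) : P) * (a * ((b + c) * (b ^ k * c ^ (p - k))))) =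
            a * ((b + c) * ((3 : P) * (T (p + 1) (k + 1) : P) * (b ^ (k + 1) * c ^ (p - k)))) +
            a * ((b + c) * ((2 * (k : P) + 1) * (T (p + 1) (k + 1) : P) *
              (b ^ k * c ^ (p - k + 1)))) +
            a * ((b + c) * (2 * ((p - k : ℕ) : P) * (T (p + 1) (k + 1) : P) *
              (b ^ (k + 2) * c ^ (p - k - 1)))) := by
          intro k _
          rw [hDnat, key]
          ring
        rw [Finset.sum_congr rfl step2, Finset.sum_add_distrib, Finset.sum_add_distrib]
        -- split the target sum using the recurrence
        have hR : a * ((b + c) * ∑ j ∈ Finset.range (p + 1 + 1),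
            (T (p + 1 + 1) (j + 1) : P) * (b ^ j * c ^ (p + 1 - j))) =
            (∑ j ∈ Finset.range (p + 1 + 1), a * ((b + c) *
              (((2 * j + 1 : ℕ) : P) * (T (p + 1) (j + 1) : P) * (b ^ j * c ^ (p + 1 - j)))) +
             ∑ j ∈ Finset.range (p + 1 + 1), a * ((b + c) *
              ((3 : P) * (T (p + 1) j : P) * (b ^ j * c ^ (p + 1 - j))))) +
            ∑ j ∈ Finset.range (p + 1 + 1), a * ((b + c) *
              (((2 * (p + 1 - j) + 2 : ℕ) : P) * (T (p + 1) (j - 1) : P) *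
                (b ^ j * c ^ (p + 1 - j)))) := by
          rw [Finset.mul_sum, Finset.mul_sum, ← Finset.sum_add_distrib,
            ← Finset.sum_add_distrib]
          refine Finset.sum_congr rfl fun j hj => ?_
          simp only [Finset.mem_range] at hj
          have hrec := hTrec (p + 1 + 1) (j + 1) (by omega) (by omega)
          have e1 : 2 * (j + 1) - 1 = 2 * j + 1 := by omega
          have e2 : 2 * (p + 1 + 1) + 2 - 2 * (j + 1) = 2 * (p + 1 - j) + 2 := by omega
          have e3 : j + 1 - 2 = j - 1 := by omega
          have e4 : p + 1 + 1 - 1 = p + 1 := by omega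
          have e5 : j + 1 - 1 = j := by omega
          rw [e1, e2, e3, e4, e5] at hrec
          rw [hrec]
          push_cast
          ring
        rw [hR]
        -- match up the three pieces
        have h1 : (∑ k ∈ Finset.range (p + 1), a * ((b + c) *
              ((3 : P) * (T (p + 1) (k + 1) : P) * (b ^ (k + 1) * c ^ (p - k))))) =
            ∑ j ∈ Finset.range (p + 1 + 1), a * ((b + c) *
              ((3 : P) * (T (p + 1) j : P) * (b ^ j * c ^ (p + 1 - j)))) := by
          rw [Finset.sum_range_succ' (fun j => a * ((b + c) *
            ((3 : P) * (T (p + 1) j : P) * (b ^ j * c ^ (p + 1 - j))))) (p + 1)]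
          rw [hT0]
          simp only [Nat.cast_zero, mul_zero, zero_mul, add_zero]
          refine Finset.sum_congr rfl fun k _ => ?_
          have : p + 1 - (k + 1) = p - k := by omega
          rw [this]
        have h2 : (∑ k ∈ Finset.range (p + 1), a * ((b + c) *
              ((2 * (k : P) + 1) * (T (p + 1) (k + 1) : P) * (b ^ k * c ^ (p - k + 1))))) =
            ∑ j ∈ Finset.range (p + 1 + 1), a * ((b + c) *
              (((2 * j + 1 : ℕ) : P) * (T (p + 1) (j + 1) : P) * (b ^ j * c ^ (p + 1 - j)))) := by
          rw [Finset.sum_range_succ (fun j => a * ((b + c) *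
            (((2 * j + 1 : ℕ) : P) * (T (p + 1) (j + 1) : P) * (b ^ j * c ^ (p + 1 - j))))) (p + 1)]
          rw [Tzero (p + 1) (by omega) (p + 1 + 1) (by omega)]
          simp only [Nat.cast_zero, mul_zero, zero_mul, add_zero]
          refine Finset.sum_congr rfl fun k hk => ?_
          simp only [Finset.mem_range] at hk
          have : p - k + 1 = p + 1 - k := by omega
          rw [this]
          push_cast
          ring
        have h3 : (∑ k ∈ Finset.range (p + 1), a * ((b + c) *
              (2 * ((p - k : ℕ) : P) * (T (p + 1) (k + 1) : P) * (b ^ (k + 2) * c ^ (p - k - 1))))) =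
            ∑ j ∈ Finset.range (p + 1 + 1), a * ((b + c) *
              (((2 * (p + 1 - j) + 2 : ℕ) : P) * (T (p + 1) (j - 1) : P) *
                (b ^ j * c ^ (p + 1 - j)))) := by
          rw [Finset.sum_range_succ (fun k => a * ((b + c) *
            (2 * ((p - k : ℕ) : P) * (T (p + 1) (k + 1) : P) * (b ^ (k + 2) * c ^ (p - k - 1))))) p]
          rw [Nat.sub_self]
          simp only [Nat.cast_zero, mul_zero, zero_mul, add_zero]
          rw [Finset.sum_range_succ' (fun j => a * ((b + c) *
            (((2 * (p + 1 - j) + 2 : ℕ) : P) * (T (p + 1) (j - 1) : P) *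
              (b ^ j * c ^ (p + 1 - j))))) (p + 1)]
          simp only [Nat.zero_sub, hT0, Nat.cast_zero, mul_zero, zero_mul, add_zero]
          rw [Finset.sum_range_succ' (fun i => a * ((b + c) *
            (((2 * (p + 1 - (i + 1)) + 2 : ℕ) : P) * (T (p + 1) (i + 1 - 1) : P) *
              (b ^ (i + 1) * c ^ (p + 1 - (i + 1)))))) p]
          simp only [Nat.add_sub_cancel, hT0, Nat.cast_zero, mul_zero, zero_mul, add_zero]
          refine Finset.sum_congr rfl fun k hk => ?_
          simp only [Finset.mem_range] at hk
          have e7 : p + 1 - (k + 1 + 1) = p - k - 1 := by omega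
          have e8 : (2 * (p + 1 - (k + 1 + 1)) + 2 : ℕ) = 2 * (p - k) := by omega
          rw [e8, e7]
          push_cast [Nat.cast_sub (by omega : k ≤ p)]
          rw [← Nat.cast_sub (by omega : k ≤ p)]
        rw [h1, h2, h3]
        ring
  -- convert to the `Icc` statement
  rw [main n hn]
  have hIcc : Finset.Icc 1 n = Finset.Ico 1 (n + 1) := by rw [Finset.Ico_add_one_right_eq_Icc]
  rw [hIcc, Finset.sum_Ico_eq_sum_range]
  simp only [Nat.add_sub_cancel]
  rw [mul_assoc]
  congr 1
  congr 1
  refine Finset.sum_congr rfl fun k _ => ?_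
  have e1 : 1 + k - 1 = k := by omega
  have e2 : n - (1 + k) = n - 1 - k := by omega
  rw [e1, e2]
  rw [Nat.add_comm k 1]
  ring
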